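/- For every τ ∈ ℂ that is not a nonnegative integer and every x ∈ ℂ, the Hermite function has the convergent power series representation H_τ(x) = (1/(2Γ(−τ))) · Σ_{m=0}^{∞} (−1)^m · (Γ((m−τ)/2)/m!) · (2x)^m. -/

import Mathlib

open Complex MeasureTheory Filter Topology

/-- Pochhammer symbol `(a)_m = a (a+1) ⋯ (a+m-1)` for complex `a`. -/
noncomputable def cPoch (a : ℂ) (m : ℕ) : ℂ := ∏ k ∈ Finset.range m, (a + k)

/-- Confluent hypergeometric function `₁F₁(a, b, z) = Σ (a)_m / (b)_m · z^m / m!`. -/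
noncomputable def oneF1 (a b z : ℂ) : ℂ :=
  ∑' m : ℕ, (cPoch a m / cPoch b m) * z ^ m / (Nat.factorial m : ℂ)

/-- The Hermite function `H_τ` of complex degree `τ`. -/
noncomputable def hermiteFn (τ x : ℂ) : ℂ :=
  2 ^ τ * (Complex.Gamma (1 / 2) / Complex.Gamma ((1 - τ) / 2)) *
      oneF1 (-τ / 2) (1 / 2) (x ^ 2) +
    2 ^ τ * x * (Complex.Gamma (-(1 / 2)) / Complex.Gamma (-τ / 2)) *
      oneF1 ((1 - τ) / 2) (3 / 2) (x ^ 2)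

/-- Moments of the generalized Hermite linear functional `𝒢_H(τ)`:
`m_{2k}(τ) = (τ+1)_{2k} / (k! 2^{2k})` and `m_{2k+1}(τ) = 0`. -/
noncomputable def genHermiteMoment (τ : ℂ) (n : ℕ) : ℂ :=
  if n % 2 = 0 then cPoch (τ + 1) n / (((n / 2).factorial : ℂ) * 2 ^ n) else 0

lemma cPoch_ne_zero {a : ℂ} (h : ∀ k : ℕ, a + k ≠ 0) (m : ℕ) : cPoch a m ≠ 0 :=
  Finset.prod_ne_zero_iff.2 fun k _ => h k

lemma cPoch_succ (a : ℂ) (n : ℕ) : cPoch a (n + 1) = cPoch a n * (a + n) :=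
  Finset.prod_range_succ _ _

lemma Gamma_add_nat {a : ℂ} (h : ∀ k : ℕ, a + k ≠ 0) (m : ℕ) :
    Complex.Gamma (a + m) = cPoch a m * Complex.Gamma a := by
  induction m with
  | zero => simp [cPoch]
  | succ n ih =>
    have h1 : a + ((n : ℕ) + 1 : ℕ) = (a + n) + 1 := by push_cast; ring
    rw [h1, Complex.Gamma_add_one _ (h n), ih, cPoch_succ]; ring

lemma fact_even (k : ℕ) : ((2 * k).factorial : ℂ) = k.factorial * 4 ^ k * cPoch (1/2) k := by
  induction k with
  | zero => simp [cPoch]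
  | succ n ih =>
    have h1 : 2 * (n + 1) = (2 * n + 1) + 1 := by ring
    rw [h1, Nat.factorial_succ, Nat.factorial_succ, cPoch_succ, Nat.factorial_succ]
    push_cast
    rw [ih]
    push_cast
    ring

lemma fact_odd (k : ℕ) : ((2 * k + 1).factorial : ℂ) = k.factorial * 4 ^ k * cPoch (3/2) k := by
  induction k with
  | zero => simp [cPoch]
  | succ n ih =>
    have e1 : ((2 * (n + 1) + 1).factorial : ℂ)
        = (2 * n + 3) * (2 * n + 2) * ((2 * n + 1).factorial) := by
      have h1 : 2 * (n + 1) + 1 = ((2 * n + 1) + 1) + 1 := by ring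
      rw [h1, Nat.factorial_succ, Nat.factorial_succ]; push_cast; ring
    rw [e1, ih, cPoch_succ, Nat.factorial_succ]; push_cast; ring

lemma oneF1_summable {a b : ℂ} (ha : ∀ k : ℕ, a + k ≠ 0) (hb : ∀ k : ℕ, b + k ≠ 0) (y : ℂ) :
    Summable (fun k : ℕ => cPoch a k / cPoch b k * y ^ k / (k.factorial : ℂ)) := by
  rcases eq_or_ne y 0 with rfl | hy
  · apply summable_of_ne_finset_zero (s := {0})
    intro k hk
    have hk0 : k ≠ 0 := by simpa using hk
    simp [zero_pow hk0]
  · have hfz : ∀ n : ℕ, cPoch a n / cPoch b n * y ^ n / (n.factorial : ℂ) ≠ 0 := fun n => by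
      apply div_ne_zero (mul_ne_zero (div_ne_zero (cPoch_ne_zero ha n) (cPoch_ne_zero hb n))
        (pow_ne_zero _ hy))
      exact_mod_cast Nat.factorial_ne_zero n
    apply summable_of_ratio_test_tendsto_lt_one (l := 0) zero_lt_one
      (Filter.Eventually.of_forall hfz)
    have key : ∀ n : ℕ, cPoch a (n+1) / cPoch b (n+1) * y ^ (n+1) / ((n+1).factorial : ℂ)
        = ((a + n) / (b + n) * (y / (n + 1))) *
          (cPoch a n / cPoch b n * y ^ n / (n.factorial : ℂ)) := fun n => by
      rw [cPoch_succ, cPoch_succ, Nat.factorial_succ, pow_succ]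
      have h1 : cPoch b n ≠ 0 := cPoch_ne_zero hb n
      have h2 : (b + n : ℂ) ≠ 0 := hb n
      have h3 : ((n.factorial : ℂ)) ≠ 0 := by exact_mod_cast Nat.factorial_ne_zero n
      have h4 : ((n : ℂ) + 1) ≠ 0 := by
        have : ((n + 1 : ℕ) : ℂ) ≠ 0 := Nat.cast_ne_zero.2 (Nat.succ_ne_zero n)
        push_cast at this; exact this
      push_cast
      field_simp
    have hratio : ∀ n : ℕ,
        ‖cPoch a (n+1) / cPoch b (n+1) * y ^ (n+1) / ((n+1).factorial : ℂ)‖ /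
          ‖cPoch a n / cPoch b n * y ^ n / (n.factorial : ℂ)‖
        = ‖(a + n) / (b + n) * (y / (n + 1))‖ := fun n => by
      rw [key n, norm_mul, mul_div_assoc, div_self (norm_ne_zero_iff.2 (hfz n)), mul_one]
    simp only [hratio]
    rw [show (0:ℝ) = ‖(0:ℂ)‖ by simp]
    apply Filter.Tendsto.norm
    have h1 : Tendsto (fun n : ℕ => (a + n) / (b + n)) atTop (𝓝 1) := by
      have he : ∀ n : ℕ, (a + n) / (b + n) = 1 + (a - b) / (b + n) := fun n => by
        field_simp [hb n]
        ring
      simp only [he]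
      have h0 : Tendsto (fun n : ℕ => (a - b) / (b + n)) atTop (𝓝 0) := by
        rw [tendsto_zero_iff_norm_tendsto_zero]
        simp only [norm_div]
        apply Filter.Tendsto.div_atTop tendsto_const_nhds
        apply tendsto_atTop_mono (f := fun n : ℕ => (n : ℝ) - ‖b‖)
        · intro n
          have h5 : ‖(n : ℂ)‖ ≤ ‖b + n‖ + ‖b‖ := by
            simpa using norm_sub_le (b + (n : ℂ)) b
          have h6 : ‖(n : ℂ)‖ = (n : ℝ) := Complex.norm_natCast n
          linarith
        · exact tendsto_atTop_add_const_right _ _ tendsto_natCast_atTop_atTop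
      simpa using tendsto_const_nhds.add h0
    have h2 : Tendsto (fun n : ℕ => y / ((n : ℂ) + 1)) atTop (𝓝 0) := by
      rw [tendsto_zero_iff_norm_tendsto_zero]
      simp only [norm_div]
      apply Filter.Tendsto.div_atTop tendsto_const_nhds
      apply tendsto_atTop_mono (f := fun n : ℕ => (n : ℝ))
      · intro n
        have h7 : ‖((n : ℂ) + 1)‖ = (n : ℝ) + 1 := by
          rw [show ((n : ℂ) + 1) = ((n + 1 : ℕ) : ℂ) by push_cast; ring,
            Complex.norm_natCast]
          push_cast; ring
        rw [h7]; linarith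
      · exact tendsto_natCast_atTop_atTop
    simpa using h1.mul h2

theorem hermiteFn_power_series (τ : ℂ) (hτ : ∀ n : ℕ, τ ≠ (n : ℂ)) (x : ℂ) :
    Summable (fun m : ℕ =>
      (-1 : ℂ) ^ m * (Complex.Gamma (((m : ℂ) - τ) / 2) / (Nat.factorial m : ℂ)) * (2 * x) ^ m) ∧
    hermiteFn τ x = (1 / (2 * Complex.Gamma (-τ))) *
      ∑' m : ℕ,
        (-1 : ℂ) ^ m * (Complex.Gamma (((m : ℂ) - τ) / 2) / (Nat.factorial m : ℂ)) * (2 * x) ^ m := by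
  set f : ℕ → ℂ := fun m =>
    (-1 : ℂ) ^ m * (Complex.Gamma (((m : ℂ) - τ) / 2) / (Nat.factorial m : ℂ)) * (2 * x) ^ m
    with hf
  -- nonvanishing facts
  have ha1 : ∀ k : ℕ, -τ / 2 + k ≠ 0 := by
    intro k h
    exact hτ (2 * k) (by push_cast; linear_combination -2 * h)
  have ha2 : ∀ k : ℕ, (1 - τ) / 2 + k ≠ 0 := by
    intro k h
    exact hτ (2 * k + 1) (by push_cast; linear_combination -2 * h)
  have hb1 : ∀ k : ℕ, (1 : ℂ) / 2 + k ≠ 0 := by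
    intro k h
    rw [show (1 : ℂ) / 2 + k = (((1 : ℝ) / 2 + k : ℝ) : ℂ) by push_cast; ring,
      Complex.ofReal_eq_zero] at h
    have : (0 : ℝ) ≤ (k : ℝ) := Nat.cast_nonneg k
    linarith
  have hb2 : ∀ k : ℕ, (3 : ℂ) / 2 + k ≠ 0 := by
    intro k h
    rw [show (3 : ℂ) / 2 + k = (((3 : ℝ) / 2 + k : ℝ) : ℂ) by push_cast; ring,
      Complex.ofReal_eq_zero] at h
    have : (0 : ℝ) ≤ (k : ℝ) := Nat.cast_nonneg k
    linarith
  -- term identities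
  have hfacC : ∀ k : ℕ, ((k.factorial : ℂ)) ≠ 0 := fun k => by
    exact_mod_cast Nat.factorial_ne_zero k
  have h4pow : ∀ k : ℕ, ((4 : ℂ)) ^ k ≠ 0 := fun k => pow_ne_zero _ (by norm_num)
  have heven : ∀ k : ℕ, f (2 * k) = Complex.Gamma (-τ / 2) *
      (cPoch (-τ / 2) k / cPoch (1 / 2) k * (x ^ 2) ^ k / (k.factorial : ℂ)) := by
    intro k
    have hGam : Complex.Gamma ((((2 * k : ℕ) : ℂ) - τ) / 2)
        = cPoch (-τ / 2) k * Complex.Gamma (-τ / 2) := by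
      rw [show (((2 * k : ℕ) : ℂ) - τ) / 2 = -τ / 2 + k by push_cast; ring]
      exact Gamma_add_nat ha1 k
    have hpow : (2 * x) ^ (2 * k) = 4 ^ k * (x ^ 2) ^ k := by
      rw [pow_mul, ← mul_pow]; ring_nf
    have hneg : (-1 : ℂ) ^ (2 * k) = 1 := by rw [pow_mul]; norm_num
    simp only [hf]
    rw [hneg, hGam, fact_even, hpow]
    field_simp [cPoch_ne_zero hb1 k, hfacC k, h4pow k]
  have hodd : ∀ k : ℕ, f (2 * k + 1) = (-(2 * x * Complex.Gamma ((1 - τ) / 2))) *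
      (cPoch ((1 - τ) / 2) k / cPoch (3 / 2) k * (x ^ 2) ^ k / (k.factorial : ℂ)) := by
    intro k
    have hGam : Complex.Gamma ((((2 * k + 1 : ℕ) : ℂ) - τ) / 2)
        = cPoch ((1 - τ) / 2) k * Complex.Gamma ((1 - τ) / 2) := by
      rw [show (((2 * k + 1 : ℕ) : ℂ) - τ) / 2 = (1 - τ) / 2 + k by push_cast; ring]
      exact Gamma_add_nat ha2 k
    have hpow : (2 * x) ^ (2 * k + 1) = 2 * x * (4 ^ k * (x ^ 2) ^ k) := by
      rw [pow_succ, pow_mul, ← mul_pow]; ring_nf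
    have hneg : (-1 : ℂ) ^ (2 * k + 1) = -1 := by rw [pow_succ, pow_mul]; norm_num
    simp only [hf]
    rw [hneg, hGam, fact_odd, hpow]
    field_simp [cPoch_ne_zero hb2 k, hfacC k, h4pow k]
  -- summability
  have S1 := oneF1_summable ha1 hb1 (x ^ 2)
  have S2 := oneF1_summable ha2 hb2 (x ^ 2)
  have sumE : Summable (fun k => f (2 * k)) :=
    (S1.mul_left _).congr fun k => (heven k).symm
  have sumO : Summable (fun k => f (2 * k + 1)) :=
    (S2.mul_left _).congr fun k => (hodd k).symm
  refine ⟨sumE.even_add_odd sumO, ?_⟩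
  have htsum : ∑' m, f m = Complex.Gamma (-τ / 2) * oneF1 (-τ / 2) (1 / 2) (x ^ 2)
      + (-(2 * x * Complex.Gamma ((1 - τ) / 2))) * oneF1 ((1 - τ) / 2) (3 / 2) (x ^ 2) := by
    rw [← tsum_even_add_odd sumE sumO, tsum_congr heven, tsum_congr hodd,
      tsum_mul_left, tsum_mul_left, oneF1, oneF1]
  rw [htsum, hermiteFn]
  -- Gamma facts
  have hGhalf : Complex.Gamma (-(1 / 2) : ℂ) = -2 * Complex.Gamma (1 / 2) := by
    have h := Complex.Gamma_add_one (-(1 / 2) : ℂ) (by norm_num)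
    rw [show (-(1 / 2) : ℂ) + 1 = 1 / 2 by ring] at h
    linear_combination 2 * h
  have hsqrt : (↑(Real.sqrt Real.pi) : ℂ) = Complex.Gamma (1 / 2) := by
    rw [Complex.Gamma_one_half_eq, Real.sqrt_eq_rpow,
      show ((1 : ℂ) / 2) = ((1 / 2 : ℝ) : ℂ) by norm_num,
      Complex.ofReal_cpow Real.pi_pos.le]
  have hdup := Complex.Gamma_mul_Gamma_add_half (-τ / 2)
  rw [show -τ / 2 + 1 / 2 = (1 - τ) / 2 by ring, show 2 * (-τ / 2) = -τ by ring,
    show (1 : ℂ) - -τ = 1 + τ by ring, hsqrt,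
    Complex.cpow_add _ _ two_ne_zero, Complex.cpow_one] at hdup
  have G1 : Complex.Gamma ((1 - τ) / 2) ≠ 0 := Complex.Gamma_ne_zero fun m h' =>
    ha2 m (by rw [h']; ring)
  have G2 : Complex.Gamma (-τ / 2) ≠ 0 := Complex.Gamma_ne_zero fun m h' =>
    ha1 m (by rw [h']; ring)
  have G3 : Complex.Gamma (-τ) ≠ 0 := Complex.Gamma_ne_zero fun m h' =>
    hτ m (by linear_combination -h')
  have c1 : 2 ^ τ * (Complex.Gamma (1 / 2) / Complex.Gamma ((1 - τ) / 2))
      = (1 / (2 * Complex.Gamma (-τ))) * Complex.Gamma (-τ / 2) := by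
    simp only [neg_div] at hdup ⊢
    field_simp
    linear_combination -hdup
  have c2 : 2 ^ τ * (Complex.Gamma (-(1 / 2) : ℂ) / Complex.Gamma (-τ / 2))
      = (1 / (2 * Complex.Gamma (-τ))) * (-(2 * Complex.Gamma ((1 - τ) / 2))) := by
    rw [hGhalf]
    simp only [neg_div] at hdup G2 ⊢
    field_simp
    linear_combination hdup
  linear_combination oneF1 (-τ / 2) (1 / 2) (x ^ 2) * c1 +
    x * oneF1 ((1 - τ) / 2) (3 / 2) (x ^ 2) * c2
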